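/- Let v be a vertex of eccentricity r in a connected graph G of order n, and suppose n_0 = 1, n_i ≥ 2 for i ∈ {1,2,r−2,r−1}, n_i ≥ 4 for 3 ≤ i ≤ r−3, and n_r ≥ 1, with Σ_{i=0}^r n_i = n. Then σ(v) = Σ_{i=0}^r i·n_i ≤ (n² + 10n + 25)/8. -/

import Mathlib

open SimpleGraph Finset

/-- The eccentricity of a vertex: the maximum distance from `v` to any vertex. -/
noncomputable def SimpleGraph.ecc {V : Type*} [Fintype V] (G : SimpleGraph V) (v : V) : ℕ :=
  Finset.univ.sup (fun u => G.dist v u)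

/-- `n_i(v)`: the number of vertices at distance exactly `i` from `v`. -/
noncomputable def SimpleGraph.nLevel {V : Type*} [Fintype V] (G : SimpleGraph V) (v : V) (i : ℕ) : ℕ :=
  (Finset.univ.filter (fun u => G.dist v u = i)).card

/-- The proximity of `G`: the minimum over all vertices of the average distance
to the other vertices. -/
noncomputable def SimpleGraph.proximity {V : Type*} [Fintype V] [Nonempty V]
    (G : SimpleGraph V) : ℚ :=
  Finset.univ.inf' Finset.univ_nonempty
    (fun v => (∑ u, (G.dist v u : ℚ)) / ((Fintype.card V : ℚ) - 1))

/-- A combinatorial plane embedding of a graph: a collection of faces, each a cycle,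
such that every edge lies on exactly two faces, satisfying Euler's formula. -/
structure PlaneEmbedding {V : Type*} [Fintype V] [DecidableEq V] (G : SimpleGraph V)
    [DecidableRel G.Adj] where
  faces : Set ((v : V) × G.Walk v v)
  finite : faces.Finite
  isCycle : ∀ f ∈ faces, f.2.IsCycle
  edge_two_faces : ∀ e ∈ G.edgeSet, ∃ f ∈ faces, ∃ g ∈ faces, f ≠ g ∧
    e ∈ f.2.edges ∧ e ∈ g.2.edges ∧ ∀ h ∈ faces, e ∈ h.2.edges → h = f ∨ h = g
  euler : (Fintype.card V : ℤ) - (G.edgeFinset.card : ℤ) + (finite.toFinset.card : ℤ) = 2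

/-- A quadrangulation: a connected bipartite plane graph all of whose faces have length 4. -/
def PlaneEmbedding.IsQuadrangulation {V : Type*} [Fintype V] [DecidableEq V]
    {G : SimpleGraph V} [DecidableRel G.Adj] (P : PlaneEmbedding G) : Prop :=
  G.Connected ∧ G.Colorable 2 ∧ ∀ f ∈ P.faces, f.2.length = 4

/-- A triangulation (maximal planar graph): a connected plane graph all of whose faces
have length 3. -/
def PlaneEmbedding.IsTriangulation {V : Type*} [Fintype V] [DecidableEq V]
    {G : SimpleGraph V} [DecidableRel G.Adj] (P : PlaneEmbedding G) : Prop :=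
  G.Connected ∧ ∀ f ∈ P.faces, f.2.length = 3

/-- `G` is `k`-connected: it has more than `k` vertices and removing any fewer than `k`
vertices leaves a connected graph. -/
def SimpleGraph.IsKConnected {V : Type*} [Fintype V] [DecidableEq V] (G : SimpleGraph V)
    (k : ℕ) : Prop :=
  k < Fintype.card V ∧
    ∀ s : Finset V, s.card < k → ((⊤ : G.Subgraph).deleteVerts ↑s).coe.Connected


private lemma gaussQ (m : ℕ) : ∑ i ∈ Finset.range m, (i : ℚ) = m * (m - 1) / 2 := by
  induction m with
  | zero => simp
  | succ k ih =>
    rw [Finset.sum_range_succ, ih]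
    push_cast
    ring

/-- Counting step for quadrangulations: level-size lower bounds imply
`σ(v) ≤ (n² + 10n + 25)/8`. -/
theorem stmt_11 {V : Type*} [Fintype V] (G : SimpleGraph V) (hG : G.Connected)
    (v : V) (r n : ℕ) (hr : G.ecc v = r) (hn : Fintype.card V = n)
    (h0 : G.nLevel v 0 = 1)
    (hlow : ∀ i ∈ ({1, 2, r - 2, r - 1} : Set ℕ), 2 ≤ G.nLevel v i)
    (hmid : ∀ i : ℕ, 3 ≤ i → i ≤ r - 3 → 4 ≤ G.nLevel v i)
    (hrr : 1 ≤ G.nLevel v r)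
    (hsum : ∑ i ∈ Finset.range (r + 1), G.nLevel v i = n) :
    (∑ u, (G.dist v u : ℚ)) ≤ ((n : ℚ) ^ 2 + 10 * n + 25) / 8 := by
  classical
  have hdle : ∀ u : V, G.dist v u ≤ r := by
    intro u; rw [← hr]; exact Finset.le_sup (Finset.mem_univ u)
  set N : ℕ → ℚ := fun i => (G.nLevel v i : ℚ) with hNdef
  have hA : (∑ u, (G.dist v u : ℚ)) = ∑ i ∈ Finset.range (r+1), (i : ℚ) * N i := by
    rw [← Finset.sum_fiberwise_of_maps_to (g := G.dist v)
      (fun u _ => Finset.mem_range.mpr (Nat.lt_succ_of_le (hdle u)))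
      (fun u => ((G.dist v u : ℚ)))]
    refine Finset.sum_congr rfl fun i _ => ?_
    have hc : ∀ u ∈ Finset.univ.filter (fun u => G.dist v u = i),
        ((G.dist v u : ℚ)) = (i : ℚ) := by
      intro u hu
      simp only [Finset.mem_filter] at hu
      rw [hu.2]
    rw [Finset.sum_congr rfl hc, Finset.sum_const, nsmul_eq_mul]
    simp only [hNdef, SimpleGraph.nLevel]
    rw [mul_comm]
  have hsumN : ∑ i ∈ Finset.range (r+1), N i = (n : ℚ) := by
    simp only [hNdef, ← Nat.cast_sum]
    exact_mod_cast hsum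
  have hN0 : N 0 = 1 := by simp [hNdef, h0]
  have hN1 : (2:ℚ) ≤ N 1 := by simp only [hNdef]; exact_mod_cast hlow 1 (by simp)
  have hN2 : (2:ℚ) ≤ N 2 := by simp only [hNdef]; exact_mod_cast hlow 2 (by simp)
  have hNr2 : (2:ℚ) ≤ N (r-2) := by simp only [hNdef]; exact_mod_cast hlow (r-2) (by simp)
  have hNr1 : (2:ℚ) ≤ N (r-1) := by simp only [hNdef]; exact_mod_cast hlow (r-1) (by simp)
  have hNr : (1:ℚ) ≤ N r := by simp only [hNdef]; exact_mod_cast hrr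
  have key : 2*(r:ℚ)^2 - 5*r ≤ ∑ i ∈ Finset.range (r+1), ((r:ℚ) - i) * N i := by
    rcases le_or_gt r 5 with h5 | h6
    · interval_cases r <;>
        simp only [Finset.sum_range_succ, Finset.sum_range_zero] <;>
        norm_num at hNr2 hNr1 hNr hN1 hN2 hN0 ⊢ <;>
        linarith
    · have hr6 : (6:ℚ) ≤ (r:ℚ) := by exact_mod_cast h6
      have h3le : (3:ℕ) ≤ r - 2 := by omega
      have h2le : r - 2 ≤ r + 1 := by omega
      rw [Finset.range_eq_Ico,
        ← Finset.sum_Ico_consecutive _ (Nat.zero_le (r-2)) h2le,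
        ← Finset.sum_Ico_consecutive _ (Nat.zero_le 3) h3le]
      have part1 : 5*(r:ℚ) - 6 ≤ ∑ i ∈ Finset.Ico 0 3, ((r:ℚ) - i) * N i := by
        rw [show Finset.Ico 0 3 = Finset.range 3 from by rw [Finset.range_eq_Ico]]
        simp only [Finset.sum_range_succ, Finset.sum_range_zero]
        have t1 : ((r:ℚ) - 1) * 2 ≤ ((r:ℚ) - 1) * N 1 :=
          mul_le_mul_of_nonneg_left hN1 (by linarith)
        have t2 : ((r:ℚ) - 2) * 2 ≤ ((r:ℚ) - 2) * N 2 :=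
          mul_le_mul_of_nonneg_left hN2 (by linarith)
        push_cast
        nlinarith [hN0]
      have c2 : ((r-2:ℕ):ℚ) = (r:ℚ) - 2 := by
        push_cast [Nat.cast_sub (show 2 ≤ r by omega)]; ring
      have c1 : ((r-1:ℕ):ℚ) = (r:ℚ) - 1 := by
        push_cast [Nat.cast_sub (show 1 ≤ r by omega)]; ring
      have part3 : (6:ℚ) ≤ ∑ i ∈ Finset.Ico (r-2) (r+1), ((r:ℚ) - i) * N i := by
        rw [Finset.sum_Ico_eq_sum_range, show r + 1 - (r-2) = 3 from by omega]
        simp only [Finset.sum_range_succ, Finset.sum_range_zero]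
        rw [show r - 2 + 0 = r - 2 from rfl, show r - 2 + 1 = r - 1 from by omega,
          show r - 2 + 2 = r from by omega]
        rw [c2, c1]
        have hNnn : (0:ℚ) ≤ N r := Nat.cast_nonneg _
        nlinarith [hNr2, hNr1]
      have part2 : 2*(r:ℚ)^2 - 10*r ≤ ∑ i ∈ Finset.Ico 3 (r-2), ((r:ℚ) - i) * N i := by
        have step : ∑ i ∈ Finset.Ico 3 (r-2), ((r:ℚ) - i) * 4 ≤
            ∑ i ∈ Finset.Ico 3 (r-2), ((r:ℚ) - i) * N i := by
          apply Finset.sum_le_sum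
          intro i hi
          have hi' := Finset.mem_Ico.mp hi
          have h4 : (4:ℚ) ≤ N i := by
            simp only [hNdef]; exact_mod_cast hmid i hi'.1 (by omega)
          have hnn : (0:ℚ) ≤ (r:ℚ) - (i:ℚ) := by
            have : (i:ℚ) ≤ (r:ℚ) := by exact_mod_cast (show i ≤ r by omega)
            linarith
          exact mul_le_mul_of_nonneg_left h4 hnn
        refine le_trans ?_ step
        have hcard : (Finset.Ico 3 (r-2)).card = r - 5 := by
          rw [Nat.card_Ico]; omega
        have hsum_i : ∑ i ∈ Finset.Ico 3 (r-2), (i:ℚ) =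
            (∑ i ∈ Finset.range (r-2), (i:ℚ)) - ∑ i ∈ Finset.range 3, (i:ℚ) := by
          rw [Finset.range_eq_Ico,
            ← Finset.sum_Ico_consecutive (fun i => (i:ℚ)) (Nat.zero_le 3)
              (show 3 ≤ r - 2 by omega)]
          rw [← Finset.range_eq_Ico]
          ring
        have g1 := gaussQ (r-2)
        rw [c2] at g1
        have expand : ∑ i ∈ Finset.Ico 3 (r-2), ((r:ℚ) - i) * 4 =
            4 * ((r:ℚ) * ((r:ℚ) - 5) - ∑ i ∈ Finset.Ico 3 (r-2), (i:ℚ)) := by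
          simp only [sub_mul]
          rw [Finset.sum_sub_distrib, Finset.sum_const, hcard, nsmul_eq_mul,
            ← Finset.sum_mul]
          have c5 : ((r-5:ℕ):ℚ) = (r:ℚ) - 5 := by
            push_cast [Nat.cast_sub (show 5 ≤ r by omega)]; ring
          rw [c5]; ring
        rw [expand, hsum_i, g1]
        norm_num
        nlinarith [hr6]
      linarith
  have hrewrite : ∑ i ∈ Finset.range (r+1), (i:ℚ) * N i =
      (r:ℚ) * (n:ℚ) - ∑ i ∈ Finset.range (r+1), ((r:ℚ) - i) * N i := by
    rw [← hsumN, Finset.mul_sum, ← Finset.sum_sub_distrib]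
    exact Finset.sum_congr rfl fun i _ => by ring
  rw [hA, hrewrite]
  nlinarith [key, sq_nonneg ((n:ℚ) + 5 - 4*(r:ℚ))]
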